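/- There exists a dense subset X of ℝ of cardinality 2^{ℵ₀} such that the only order-embedding of X into itself is the identity (X is embedding-rigid). -/

import Mathlib

open Set Cardinal

noncomputable section DM

/-- agreement at common continuity points -/
lemma dm_eq_of_cont {f g : ℝ → ℝ} (hq : ∀ q : ℚ, f q = g q) {x : ℝ}
    (hf : ContinuousAt f x) (hg : ContinuousAt g x) : f x = g x := by
  have hne : (nhdsWithin x (Set.range ((↑) : ℚ → ℝ))).NeBot := by
    rw [← mem_closure_iff_nhdsWithin_neBot]
    have : Dense (Set.range ((↑) : ℚ → ℝ)) := Rat.denseRange_cast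
    exact this x
  have h1 : Filter.Tendsto f (nhdsWithin x (Set.range ((↑) : ℚ → ℝ))) (nhds (f x)) :=
    hf.continuousWithinAt
  have h2 : Filter.Tendsto g (nhdsWithin x (Set.range ((↑) : ℚ → ℝ))) (nhds (g x)) :=
    hg.continuousWithinAt
  have h1' : Filter.Tendsto g (nhdsWithin x (Set.range ((↑) : ℚ → ℝ))) (nhds (f x)) := by
    refine h1.congr' ?_
    filter_upwards [self_mem_nhdsWithin] with y hy
    obtain ⟨q, rfl⟩ := hy
    exact hq q
  exact tendsto_nhds_unique h1' h2

/-- the monotone functions on ℝ number at most continuum -/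
lemma dm_card_monotone : #{f : ℝ → ℝ // Monotone f} ≤ 𝔠 := by
  classical
  set D : (ℝ → ℝ) → Set (ℝ × ℝ) := fun f => (fun x => (x, f x)) '' {x | ¬ContinuousAt f x}
    with hD
  have hDc : ∀ f : {f : ℝ → ℝ // Monotone f}, (D f.1).Countable := fun f =>
    (f.2.countable_not_continuousAt).image _
  set Φ : {f : ℝ → ℝ // Monotone f} → (ℚ → ℝ) × Option (ℕ → ℝ × ℝ) := fun f =>
    ((fun q : ℚ => f.1 q),
      if h : (D f.1).Nonempty then some ((hDc f).exists_eq_range h).choose else none)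
    with hΦ
  have hrec : ∀ f : {f : ℝ → ℝ // Monotone f}, ∀ s : Set (ℝ × ℝ),
      ((if h : (D f.1).Nonempty then some ((hDc f).exists_eq_range h).choose else none) =
        (if h : s.Nonempty then some (Classical.choice (by
          exact ⟨fun _ => (0,0)⟩ : Nonempty (ℕ → ℝ × ℝ))) else none)) → True := fun _ _ _ => trivial
  have hinj : Function.Injective Φ := by
    intro f g hfg
    have hq : ∀ q : ℚ, f.1 q = g.1 q := fun q => congrFun (congrArg Prod.fst hfg) q
    have hDeq : D f.1 = D g.1 := by
      have h2 := congrArg Prod.snd hfg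
      simp only [Φ] at h2
      by_cases h : (D f.1).Nonempty <;> by_cases h' : (D g.1).Nonempty
      · rw [dif_pos h, dif_pos h'] at h2
        have := ((hDc f).exists_eq_range h).choose_spec
        have := ((hDc g).exists_eq_range h').choose_spec
        rw [‹D f.1 = _›, ‹D g.1 = _›, Option.some_inj.1 h2]
      · rw [dif_pos h, dif_neg h'] at h2; exact absurd h2 (by simp)
      · rw [dif_neg h, dif_pos h'] at h2; exact absurd h2 (by simp)
      · rw [Set.not_nonempty_iff_eq_empty.1 h, Set.not_nonempty_iff_eq_empty.1 h']
    apply Subtype.ext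
    funext x
    by_cases hf : ContinuousAt f.1 x <;> by_cases hg : ContinuousAt g.1 x
    · exact dm_eq_of_cont hq hf hg
    · have : (x, g.1 x) ∈ D g.1 := ⟨x, hg, rfl⟩
      rw [← hDeq] at this
      obtain ⟨y, -, hy⟩ := this
      have hx : y = x := congrArg Prod.fst hy
      have h2 := congrArg Prod.snd hy
      simp only at h2
      rw [hx] at h2
      first | exact h2 | exact h2.symm
    · have : (x, f.1 x) ∈ D f.1 := ⟨x, hf, rfl⟩
      rw [hDeq] at this
      obtain ⟨y, -, hy⟩ := this
      have hx : y = x := congrArg Prod.fst hy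
      have h2 := congrArg Prod.snd hy
      simp only at h2
      rw [hx] at h2
      first | exact h2 | exact h2.symm
    · have : (x, f.1 x) ∈ D f.1 := ⟨x, hf, rfl⟩
      rw [hDeq] at this
      obtain ⟨y, -, hy⟩ := this
      have hx : y = x := congrArg Prod.fst hy
      have h2 := congrArg Prod.snd hy
      simp only at h2
      rw [hx] at h2
      first | exact h2 | exact h2.symm
  calc #{f : ℝ → ℝ // Monotone f} ≤ #((ℚ → ℝ) × Option (ℕ → ℝ × ℝ)) := mk_le_of_injective hinj
    _ ≤ 𝔠 := by
        have h1 : #(ℚ → ℝ) = 𝔠 := by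
          rw [← power_def, mk_real, Cardinal.mkRat, continuum_power_aleph0]
        have h2 : #(ℕ → ℝ × ℝ) = 𝔠 := by
          simp only [← power_def, mk_prod, mk_real, lift_id, mk_nat]
          rw [continuum_mul_self, continuum_power_aleph0]
        simp only [mk_prod, mk_option, h1, h2, lift_id]
        rw [add_one_eq aleph0_le_continuum, continuum_mul_self]

end DM

namespace DM13
open scoped Classical

abbrev Idx : Type := Cardinal.continuum.ord.ToType

lemma card_Idx : #Idx = 𝔠 := by
  rw [Cardinal.mk_toType, Cardinal.card_ord]

noncomputable instance : IsWellOrder Idx (· < ·) := isWellOrder_lt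

lemma card_lt_Idx (i : Idx) : #{j : Idx // j < i} < 𝔠 := by
  have h2 : #{j : Idx // j < i} =
      (Ordinal.typein (α := Idx) ((· < ·) : Idx → Idx → Prop) i).card :=
    Ordinal.card_typein i
  rw [h2]
  exact Cardinal.card_typein_toType_lt Cardinal.continuum i

abbrev P : Type := {f : ℝ → ℝ // Monotone f} × ℚ × ℚ

instance : Nonempty P := ⟨⟨⟨id, monotone_id⟩, 0, 0⟩⟩

lemma exists_surj : ∃ e : Idx → P, Function.Surjective e := by
  have hP : #P ≤ #Idx := by
    rw [card_Idx]
    calc #P = #{f : ℝ → ℝ // Monotone f} * (#ℚ * #ℚ) := by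
          simp [mk_prod, lift_id]
      _ ≤ 𝔠 * (ℵ₀ * ℵ₀) := by
          gcongr
          · exact dm_card_monotone
          · exact Cardinal.mkRat.le
          · exact Cardinal.mkRat.le
      _ = 𝔠 := by rw [aleph0_mul_aleph0, continuum_mul_aleph0]
  obtain ⟨emb⟩ := Cardinal.le_def _ _ |>.1 hP
  refine ⟨fun i => Function.invFun emb i, fun p => ⟨emb p, Function.leftInverse_invFun emb.injective p⟩⟩

noncomputable def e : Idx → P := exists_surj.choose

lemma e_surj : Function.Surjective e := exists_surj.choose_spec

/-- the interval used at stage with data (p,q) -/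
def Iv (p q : ℚ) : Set ℝ := if (p : ℝ) < q then Set.Ioo (p : ℝ) q else Set.Ioo 0 1

lemma card_Iv (p q : ℚ) : 𝔠 ≤ #(Iv p q) := by
  unfold Iv
  split_ifs with h
  · exact (Cardinal.mk_Ioo_real h).ge
  · exact (Cardinal.mk_Ioo_real one_pos).ge

lemma dm_pick (f : ℝ → ℝ) (I : Set ℝ) (hI : 𝔠 ≤ #I) (S : Set ℝ) (hS : #S < 𝔠) :
    ∃ x, x ∈ I ∧ x ∉ S ∧ (Set.InjOn f I → f x ∉ S) := by
  by_cases hinj : Set.InjOn f I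
  · have h2 : #(I ∩ f ⁻¹' S : Set ℝ) < 𝔠 := by
      refine lt_of_le_of_lt ?_ hS
      refine mk_le_of_injective (f := fun x : (I ∩ f ⁻¹' S : Set ℝ) => (⟨f x.1, x.2.2⟩ : S)) ?_
      rintro ⟨x, hx⟩ ⟨y, hy⟩ h
      exact Subtype.ext (hinj hx.1 hy.1 (congrArg Subtype.val h))
    have hU : #((S ∪ (I ∩ f ⁻¹' S)) : Set ℝ) < 𝔠 :=
      (mk_union_le _ _).trans_lt (Cardinal.add_lt_of_lt aleph0_le_continuum hS h2)
    have hns : ¬ (I ⊆ S ∪ (I ∩ f ⁻¹' S)) := fun h =>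
      absurd (hI.trans (mk_le_mk_of_subset h)) (not_le.2 hU)
    obtain ⟨x, hxI, hxn⟩ := Set.not_subset.1 hns
    refine ⟨x, hxI, fun hxS => hxn (Or.inl hxS), fun _ hfx => hxn (Or.inr ⟨hxI, hfx⟩)⟩
  · have hns : ¬ (I ⊆ S) := fun h =>
      absurd (hI.trans (mk_le_mk_of_subset h)) (not_le.2 hS)
    obtain ⟨x, hxI, hxn⟩ := Set.not_subset.1 hns
    exact ⟨x, hxI, hxn, fun h => absurd h hinj⟩

def prevSet (i : Idx) (prev : ∀ j, j < i → ℝ × Option ℝ) : Set ℝ :=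
  {x | ∃ j, ∃ h : j < i, (prev j h).1 = x} ∪ {x | ∃ j, ∃ h : j < i, (prev j h).2 = some x}

lemma card_prevSet (i : Idx) (prev : ∀ j, j < i → ℝ × Option ℝ) :
    #(prevSet i prev) < 𝔠 := by
  have hc := card_lt_Idx i
  have h1 : #({x | ∃ j, ∃ h : j < i, (prev j h).1 = x} : Set ℝ) < 𝔠 := by
    refine lt_of_le_of_lt ?_ hc
    have : ({x | ∃ j, ∃ h : j < i, (prev j h).1 = x} : Set ℝ) ⊆
        Set.range (fun j : {j : Idx // j < i} => (prev j.1 j.2).1) := by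
      rintro x ⟨j, h, rfl⟩; exact ⟨⟨j, h⟩, rfl⟩
    exact (mk_le_mk_of_subset this).trans (mk_range_le)
  have h2 : #({x | ∃ j, ∃ h : j < i, (prev j h).2 = some x} : Set ℝ) < 𝔠 := by
    refine lt_of_le_of_lt ?_ hc
    have : ({x | ∃ j, ∃ h : j < i, (prev j h).2 = some x} : Set ℝ) ⊆
        Set.range (fun j : {j : Idx // j < i} => ((prev j.1 j.2).2).getD 0) := by
      rintro x ⟨j, h, hx⟩; exact ⟨⟨j, h⟩, by simp [hx]⟩
    exact (mk_le_mk_of_subset this).trans (mk_range_le)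
  exact (mk_union_le _ _).trans_lt (Cardinal.add_lt_of_lt aleph0_le_continuum h1 h2)

/-- predicate: stage (f,p,q) is "active" -/
def Good (f : ℝ → ℝ) (p q : ℚ) : Prop :=
  Set.InjOn f (Iv p q) ∧ ∀ r ∈ Iv p q, f r ≠ r

noncomputable def step (i : Idx) (prev : ∀ j, j < i → ℝ × Option ℝ) : ℝ × Option ℝ :=
  let x := (dm_pick (e i).1.1 (Iv (e i).2.1 (e i).2.2) (card_Iv _ _)
      (prevSet i prev) (card_prevSet i prev)).choose
  (x, if Good (e i).1.1 (e i).2.1 (e i).2.2 then some ((e i).1.1 x) else none)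

noncomputable def a : Idx → ℝ × Option ℝ := IsWellFounded.fix (· < ·) step

lemma a_eq (i : Idx) : a i = step i (fun j _ => a j) :=
  IsWellFounded.fix_eq (· < ·) step i

lemma a_spec (i : Idx) :
    (a i).1 ∈ Iv (e i).2.1 (e i).2.2 ∧ (a i).1 ∉ prevSet i (fun j _ => a j) ∧
      (Set.InjOn (e i).1.1 (Iv (e i).2.1 (e i).2.2) →
        (e i).1.1 (a i).1 ∉ prevSet i (fun j _ => a j)) := by
  have h := (dm_pick (e i).1.1 (Iv (e i).2.1 (e i).2.2) (card_Iv _ _)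
      (prevSet i (fun j _ => a j)) (card_prevSet i _)).choose_spec
  rw [a_eq i]
  exact h

lemma b_spec (i : Idx) :
    (a i).2 = if Good (e i).1.1 (e i).2.1 (e i).2.2 then some ((e i).1.1 (a i).1) else none := by
  conv_lhs => rw [a_eq i]
  rw [a_eq i]
  rfl

end DM13

namespace DM13

lemma a1_inj : Function.Injective (fun i : Idx => (a i).1) := by
  intro i j h
  by_contra hne
  rcases lt_or_gt_of_ne hne with hlt | hlt
  · exact (a_spec j).2.1 (Or.inl ⟨i, hlt, h⟩)
  · exact (a_spec i).2.1 (Or.inl ⟨j, hlt, h.symm⟩)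

lemma AB_disjoint (i j : Idx) (hsome : (a j).2 = some ((a i).1)) : False := by
  have hbj := b_spec j
  by_cases hgood : Good (e j).1.1 (e j).2.1 (e j).2.2
  · rw [if_pos hgood, hsome] at hbj
    have heq : (a i).1 = (e j).1.1 ((a j).1) := Option.some_inj.1 hbj
    rcases lt_trichotomy i j with hlt | heq' | hlt
    · exact ((a_spec j).2.2 hgood.1) (heq ▸ Or.inl ⟨i, hlt, rfl⟩)
    · subst heq'
      exact hgood.2 _ (a_spec i).1 heq.symm
    · exact (a_spec i).2.1 (Or.inr ⟨j, hlt, hsome⟩)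
  · rw [if_neg hgood] at hbj
    rw [hsome] at hbj
    exact Option.some_ne_none _ hbj

lemma dense_stage (p q : ℚ) (hpq : (p : ℝ) < q) : ∃ i, (a i).1 ∈ Set.Ioo (p : ℝ) q := by
  obtain ⟨i, hi⟩ := e_surj ⟨⟨id, monotone_id⟩, p, q⟩
  have h := (a_spec i).1
  rw [hi] at h
  have h' : (a i).1 ∈ Iv p q := h
  unfold Iv at h'
  rw [if_pos hpq] at h'
  exact ⟨i, h'⟩

lemma kill (f : ℝ → ℝ) (hf : Monotone f) (p q : ℚ) (hpq : (p : ℝ) < q)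
    (hinj : Set.InjOn f (Set.Ioo (p : ℝ) q)) (hne : ∀ r ∈ Set.Ioo (p : ℝ) q, f r ≠ r) :
    ∃ i, (a i).1 ∈ Set.Ioo (p : ℝ) q ∧ (a i).2 = some (f ((a i).1)) := by
  obtain ⟨i, hi⟩ := e_surj ⟨⟨f, hf⟩, p, q⟩
  have hIv : Iv (e i).2.1 (e i).2.2 = Set.Ioo (p : ℝ) q := by
    rw [hi]
    show Iv p q = _
    unfold Iv
    rw [if_pos hpq]
  have hgood : Good (e i).1.1 (e i).2.1 (e i).2.2 := by
    unfold Good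
    rw [hIv, hi]
    exact ⟨hinj, hne⟩
  have h1 := (a_spec i).1
  rw [hIv] at h1
  have h2 := b_spec i
  rw [if_pos hgood, hi] at h2
  exact ⟨i, h1, h2⟩

end DM13

theorem stmt_13 :
    ∃ X : Set ℝ, Dense X ∧ Cardinal.mk X = Cardinal.continuum ∧
      ∀ g : X → X, StrictMono g → g = id := by
  classical
  refine ⟨Set.range (fun i : DM13.Idx => (DM13.a i).1), ?_, ?_, ?_⟩
  case _ =>
    rw [dense_iff_exists_between]
    intro u v huv
    obtain ⟨p, hup, hpv⟩ := exists_rat_btwn huv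
    obtain ⟨q, hpq, hqv⟩ := exists_rat_btwn hpv
    obtain ⟨i, hi⟩ := DM13.dense_stage p q (by exact_mod_cast hpq)
    exact ⟨(DM13.a i).1, ⟨i, rfl⟩, hup.trans hi.1, hi.2.trans hqv⟩
  case _ =>
    rw [Cardinal.mk_range_eq _ DM13.a1_inj, DM13.card_Idx]
  case _ =>
    set X : Set ℝ := Set.range (fun i : DM13.Idx => (DM13.a i).1) with hX
    intro g hg
    -- dense facts
    have hdense : ∀ u v : ℝ, u < v → ∃ x, x ∈ X ∧ u < x ∧ x < v := by
      intro u v huv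
      obtain ⟨p, hup, hpv⟩ := exists_rat_btwn huv
      obtain ⟨q, hpq, hqv⟩ := exists_rat_btwn hpv
      obtain ⟨i, hi⟩ := DM13.dense_stage p q (by exact_mod_cast hpq)
      exact ⟨(DM13.a i).1, ⟨i, rfl⟩, hup.trans hi.1, hi.2.trans hqv⟩
    have hbelow : ∀ r : ℝ, ∃ x : X, (x : ℝ) ≤ r := by
      intro r
      obtain ⟨x, hx, h1, h2⟩ := hdense (r - 1) r (by linarith)
      exact ⟨⟨x, hx⟩, h2.le⟩
    have habove : ∀ r : ℝ, ∃ x : X, r < (x : ℝ) := by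
      intro r
      obtain ⟨x, hx, h1, h2⟩ := hdense r (r + 1) (by linarith)
      exact ⟨⟨x, hx⟩, h1⟩
    set S : ℝ → Set ℝ := fun r => (fun x : X => ((g x : X) : ℝ)) '' {x : X | (x : ℝ) ≤ r}
      with hS
    have hne : ∀ r, (S r).Nonempty := by
      intro r
      obtain ⟨x, hx⟩ := hbelow r
      exact ⟨_, ⟨x, hx, rfl⟩⟩
    have hbdd : ∀ r, BddAbove (S r) := by
      intro r
      obtain ⟨x', hx'⟩ := habove r
      refine ⟨((g x' : X) : ℝ), ?_⟩
      rintro y ⟨x, hx, rfl⟩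
      have hxx : x < x' := Subtype.coe_lt_coe.1 (lt_of_le_of_lt hx hx')
      exact (Subtype.coe_lt_coe.2 (hg hxx)).le
    set F : ℝ → ℝ := fun r => sSup (S r) with hF
    have hmono : Monotone F := by
      intro r s hrs
      exact csSup_le_csSup (hbdd s) (hne r) (Set.image_mono (fun x hx => le_trans hx hrs))
    have hagree : ∀ (xr : ℝ) (hx : xr ∈ X), F xr = ((g ⟨xr, hx⟩ : X) : ℝ) := by
      intro xr hx
      refine le_antisymm ?_ (le_csSup (hbdd _) (Set.mem_image_of_mem _
        (show ((⟨xr, hx⟩ : X) : ℝ) ≤ xr from le_refl _)))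
      refine csSup_le (hne _) ?_
      rintro y ⟨z, hz, rfl⟩
      have hzx : z ≤ ⟨xr, hx⟩ := Subtype.coe_le_coe.1 hz
      exact Subtype.coe_le_coe.2 (hg.monotone hzx)
    have hstrict : StrictMono F := by
      intro r1 r2 h12
      obtain ⟨x, hxX, hx1, hx2⟩ := hdense r1 r2 h12
      obtain ⟨y, hyX, hy1, hy2⟩ := hdense x r2 hx2
      have hxy : (⟨x, hxX⟩ : X) < ⟨y, hyX⟩ := Subtype.coe_lt_coe.1 hy1
      calc F r1 ≤ F x := hmono hx1.le
        _ = ((g ⟨x, hxX⟩ : X) : ℝ) := hagree x hxX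
        _ < ((g ⟨y, hyX⟩ : X) : ℝ) := Subtype.coe_lt_coe.2 (hg hxy)
        _ = F y := (hagree y hyX).symm
        _ ≤ F r2 := hmono hy2.le
    -- main rigidity argument
    have hid : ∀ x : X, g x = x := by
      intro x₀
      by_contra hne0
      have hvne : ((g x₀ : X) : ℝ) ≠ (x₀ : ℝ) := fun h => hne0 (Subtype.ext h)
      set u : ℝ := (x₀ : ℝ)
      set v : ℝ := ((g x₀ : X) : ℝ)
      have hFu : F u = v := hagree u x₀.2
      have hkill : ∃ p q : ℚ, (p : ℝ) < q ∧ ∀ r ∈ Set.Ioo (p : ℝ) q, F r ≠ r := by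
        rcases lt_or_gt_of_ne hvne with hlt | hlt
        · -- v < u
          obtain ⟨p, hvp, hpu⟩ := exists_rat_btwn hlt
          obtain ⟨q, hpq, hqu⟩ := exists_rat_btwn hpu
          refine ⟨p, q, by exact_mod_cast hpq, ?_⟩
          intro r hr heq
          have h1 : F r ≤ F u := hmono (hr.2.trans hqu).le
          rw [hFu] at h1
          have : (p : ℝ) < r := hr.1
          rw [heq] at h1
          linarith
        · -- u < v
          obtain ⟨p, hup, hpv⟩ := exists_rat_btwn hlt
          obtain ⟨q, hpq, hqv⟩ := exists_rat_btwn hpv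
          refine ⟨p, q, by exact_mod_cast hpq, ?_⟩
          intro r hr heq
          have h1 : F u ≤ F r := hmono ((hup.trans hr.1).le)
          rw [hFu] at h1
          have : r < (q : ℝ) := hr.2
          rw [heq] at h1
          linarith
      obtain ⟨p, q, hpq, hnefix⟩ := hkill
      obtain ⟨i, hiIoo, hisome⟩ := DM13.kill F hmono p q hpq
        (hstrict.injective.injOn) hnefix
      -- F (a i).1 lies in X
      have haiX : (DM13.a i).1 ∈ X := ⟨i, rfl⟩
      have hFai : F ((DM13.a i).1) = ((g ⟨(DM13.a i).1, haiX⟩ : X) : ℝ) := hagree _ haiX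
      obtain ⟨i', hi'⟩ := (g ⟨(DM13.a i).1, haiX⟩ : X).2
      rw [hFai, ← hi'] at hisome
      exact DM13.AB_disjoint i' i hisome
    funext x
    exact hid x
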